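/- For any graph G, the number of Laplacian eigenvalues of G in [0,1) is at most the domination number: m_G[0,1) ≤ γ(G). -/

import Mathlib

open scoped Classical

/-- The `i`-th Laplacian eigenvalue of `G` (in the unsorted indexing given by
the spectral theorem applied to the Laplacian matrix). -/
noncomputable def lapEig {V : Type*} [Fintype V] [DecidableEq V] (G : SimpleGraph V) : V → ℝ :=
  (G.posSemidef_lapMatrix (R := ℝ)).isHermitian.eigenvalues

/-- The number of Laplacian eigenvalues of `G` (with multiplicity) satisfying `P`. -/
noncomputable def mCount {V : Type*} [Fintype V] [DecidableEq V] (G : SimpleGraph V)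
    (P : ℝ → Prop) : ℕ :=
  (Finset.univ.filter fun i => P (lapEig G i)).card

/-- `S` is a dominating set of `G`. -/
def IsDomSet {V : Type*} (G : SimpleGraph V) (S : Finset V) : Prop :=
  ∀ v ∉ S, ∃ u ∈ S, G.Adj u v

/-- The domination number of `G`. -/
noncomputable def domNum {V : Type*} [Fintype V] (G : SimpleGraph V) : ℕ :=
  sInf {k | ∃ S : Finset V, IsDomSet G S ∧ S.card = k}

open Matrix Finset

section Aux

variable {n : ℕ}

private lemma sum_smul_dot (A : Finset (Fin n)) (e : Fin n → Fin n → ℝ) (c : Fin n → ℝ)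
    (w : Fin n → ℝ) : (∑ i ∈ A, c i • e i) ⬝ᵥ w = ∑ i ∈ A, c i * (e i ⬝ᵥ w) := by
  simp only [dotProduct, Finset.sum_apply, Pi.smul_apply, smul_eq_mul, Finset.sum_mul,
    Finset.mul_sum]
  rw [Finset.sum_comm]
  exact Finset.sum_congr rfl fun i _ => Finset.sum_congr rfl fun v _ => by ring

private lemma dot_ortho_sum (A : Finset (Fin n)) (e : Fin n → Fin n → ℝ)
    (horth : ∀ i j, e i ⬝ᵥ e j = if i = j then 1 else 0) (c d : Fin n → ℝ) :
    (∑ i ∈ A, c i • e i) ⬝ᵥ (∑ j ∈ A, d j • e j) = ∑ i ∈ A, c i * d i := by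
  rw [sum_smul_dot]
  refine Finset.sum_congr rfl fun i hi => ?_
  have : e i ⬝ᵥ (∑ j ∈ A, d j • e j) = ∑ j ∈ A, d j * (e j ⬝ᵥ e i) := by
    rw [dotProduct_comm, sum_smul_dot]
  rw [this, Finset.sum_eq_single i]
  · rw [horth i i, if_pos rfl]; ring
  · intro j _ hj; rw [horth j i, if_neg hj, mul_zero]
  · intro h; exact absurd hi h

variable (G : SimpleGraph (Fin n))

/-- Key lemma: for any dominating set `S`, `mCount G [0,1) ≤ S.card`. -/
lemma mCount_le_card_of_isDomSet {S : Finset (Fin n)} (hS : IsDomSet G S) :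
    mCount G (fun x => 0 ≤ x ∧ x < 1) ≤ S.card := by
  by_contra hcon
  push_neg at hcon
  have hL := G.posSemidef_lapMatrix (R := ℝ)
  have hH := hL.isHermitian
  set L := G.lapMatrix ℝ with hLdef
  let b := hH.eigenvectorBasis
  have heig : lapEig G = hH.eigenvalues := rfl
  set A : Finset (Fin n) :=
    Finset.univ.filter (fun i => 0 ≤ lapEig G i ∧ lapEig G i < 1) with hA
  have hmc : mCount G (fun x => 0 ≤ x ∧ x < 1) = A.card := by
    unfold mCount
    congr 1
    apply Finset.ext
    intro i
    simp only [Finset.mem_filter, hA]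
  rw [hmc] at hcon
  -- coercion to plain functions
  let ψ : EuclideanSpace ℝ (Fin n) ≃ₗ[ℝ] (Fin n → ℝ) := WithLp.linearEquiv 2 ℝ _
  let e : Fin n → (Fin n → ℝ) := fun i => ⇑(b i)
  have hψe : ∀ i, ψ (b i) = e i := fun i => rfl
  -- orthonormality as dot products
  have hortho : ∀ i j, e i ⬝ᵥ e j = if i = j then 1 else 0 := by
    intro i j
    have := orthonormal_iff_ite.mp b.orthonormal i j
    simpa [e, dotProduct, PiLp.inner_apply, RCLike.inner_apply, mul_comm] using this
  have hmve : ∀ i, L *ᵥ e i = hH.eigenvalues i • e i := fun i => hH.mulVec_eigenvectorBasis i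
  -- the span of eigenvectors with eigenvalue < 1
  let U : Submodule ℝ (EuclideanSpace ℝ (Fin n)) :=
    Submodule.span ℝ (Set.range fun i : A => (b i : EuclideanSpace ℝ (Fin n)))
  have hUrank : Module.finrank ℝ U = A.card := by
    have hli : LinearIndependent ℝ (fun i : A => (b i : EuclideanSpace ℝ (Fin n))) :=
      b.orthonormal.linearIndependent.comp _ Subtype.coe_injective
    rw [finrank_span_eq_card hli, Fintype.card_coe]
  -- the subspace of vectors vanishing on S
  let φ : EuclideanSpace ℝ (Fin n) →ₗ[ℝ] (↥S → ℝ) :=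
    { toFun := fun x v => x v.1
      map_add' := fun x y => rfl
      map_smul' := fun c x => rfl }
  have hφsurj : Function.Surjective φ := by
    intro y
    refine ⟨WithLp.toLp 2 (fun u => if h : u ∈ S then y ⟨u, h⟩ else 0), funext fun v => ?_⟩
    exact dif_pos v.2
  set W := LinearMap.ker φ with hWdef
  have hWrank : Module.finrank ℝ W = n - S.card := by
    have h1 := LinearMap.finrank_range_add_finrank_ker φ
    rw [LinearMap.range_eq_top.mpr hφsurj, finrank_top, Module.finrank_pi, Fintype.card_coe,
      finrank_euclideanSpace, Fintype.card_fin, ← hWdef] at h1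
    omega
  -- intersection is nontrivial
  have hScard : S.card ≤ n := by
    simpa using Finset.card_le_card (Finset.subset_univ S)
  have hsuple : Module.finrank ℝ ↥(U ⊔ W) ≤ n := by
    have := Submodule.finrank_le (U ⊔ W)
    simpa [finrank_euclideanSpace] using this
  have hne : (U ⊓ W) ≠ ⊥ := by
    intro hbot
    have hmain := Submodule.finrank_sup_add_finrank_inf_eq U W
    rw [hbot, finrank_bot, add_zero, hUrank, hWrank] at hmain
    have hkey : A.card + (n - S.card) ≤ n := hmain ▸ hsuple
    omega
  obtain ⟨x, hx, hx0⟩ := Submodule.exists_mem_ne_zero_of_ne_bot hne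
  have hxU : x ∈ U := hx.1
  have hxW : ∀ v ∈ S, x v = 0 := by
    intro v hv
    have : φ x = 0 := hx.2
    exact congrFun this ⟨v, hv⟩
  -- coefficients of x
  have hc0 : ∀ i ∉ A, b.repr x i = 0 := by
    intro i hi
    have hrepr : b.repr x i = inner (𝕜 := ℝ) (b i) x := b.repr_apply_apply x i
    rw [hrepr]
    refine Submodule.span_induction (p := fun y _ => inner (𝕜 := ℝ) (b i) y = 0) ?_ ?_ ?_ ?_ hxU
    · rintro y ⟨⟨j, hj⟩, rfl⟩
      exact b.orthonormal.2 (fun h : i = j => hi (h ▸ hj))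
    · simp
    · intro y z _ _ hy hz; rw [inner_add_right, hy, hz, add_zero]
    · intro a y _ hy; rw [inner_smul_right, hy, mul_zero]
  have hxsum : x = ∑ i ∈ A, b.repr x i • (b i : EuclideanSpace ℝ (Fin n)) := by
    conv_lhs => rw [← b.sum_repr x]
    exact (Finset.sum_subset (Finset.subset_univ A)
      (fun i _ hi => by rw [hc0 i hi, zero_smul])).symm
  -- the function version of x
  set y : Fin n → ℝ := ψ x with hy
  have hyv : ∀ v, y v = x v := fun v => rfl
  have hxfun : y = ∑ i ∈ A, b.repr x i • e i :=
    calc y = ψ (∑ i ∈ A, b.repr x i • (b i : EuclideanSpace ℝ (Fin n))) := congrArg ψ hxsum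
      _ = ∑ i ∈ A, b.repr x i • e i := by
          rw [map_sum]
          exact Finset.sum_congr rfl fun i _ => by rw [ψ.map_smul, hψe]
  -- quadratic form values
  have hmv : L *ᵥ y = ∑ i ∈ A, (b.repr x i * lapEig G i) • e i := by
    rw [hxfun, show L *ᵥ (∑ i ∈ A, b.repr x i • e i) = L.mulVecLin (∑ i ∈ A, b.repr x i • e i)
      from rfl, map_sum]
    refine Finset.sum_congr rfl fun i _ => ?_
    rw [L.mulVecLin.map_smul, mulVecLin_apply, hmve, heig, smul_smul]
  have hQ : y ⬝ᵥ (L *ᵥ y) = ∑ i ∈ A, lapEig G i * (b.repr x i) ^ 2 := by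
    rw [hmv, hxfun, dot_ortho_sum A e hortho]
    exact Finset.sum_congr rfl fun i _ => by ring
  have hD : y ⬝ᵥ y = ∑ i ∈ A, (b.repr x i) ^ 2 := by
    rw [hxfun, dot_ortho_sum A e hortho]
    exact Finset.sum_congr rfl fun i _ => by ring
  -- strict inequality on U
  have hlt : y ⬝ᵥ (L *ᵥ y) < y ⬝ᵥ y := by
    rw [hQ, hD]
    have hex : ∃ i ∈ A, b.repr x i ≠ 0 := by
      by_contra h
      push_neg at h
      apply hx0
      rw [hxsum]
      exact Finset.sum_eq_zero fun i hi => by rw [h i hi, zero_smul]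
    obtain ⟨i₀, hi₀A, hi₀⟩ := hex
    refine Finset.sum_lt_sum (fun i hi => ?_) ⟨i₀, hi₀A, ?_⟩
    · rw [hA] at hi
      have hlt1 : lapEig G i < 1 := ((Finset.mem_filter.mp hi).2).2
      nlinarith [sq_nonneg (b.repr x i)]
    · rw [hA] at hi₀A
      have hlt1 : lapEig G i₀ < 1 := ((Finset.mem_filter.mp hi₀A).2).2
      have hpos : 0 < (b.repr x i₀) ^ 2 := by positivity
      nlinarith
  -- inequality on W (using domination)
  have hge : y ⬝ᵥ y ≤ y ⬝ᵥ (L *ᵥ y) := by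
    have hu : ∀ v : Fin n, v ∉ S → ∃ u ∈ S, G.Adj u v := hS
    let u : Fin n → Fin n := fun v => if h : v ∉ S then (hu v h).choose else v
    have huS : ∀ v ∉ S, u v ∈ S ∧ G.Adj (u v) v := by
      intro v hv
      have hueq : u v = (hu v hv).choose := dif_pos hv
      rw [hueq]
      exact ⟨(hu v hv).choose_spec.1, (hu v hv).choose_spec.2⟩
    have hform : y ⬝ᵥ (L *ᵥ y) =
        (∑ i : Fin n, ∑ j : Fin n, if G.Adj i j then (y i - y j) ^ 2 else 0) / 2 := by
      rw [← Matrix.toLinearMap₂'_apply', hLdef, G.lapMatrix_toLinearMap₂' (R := ℝ) y]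
    rw [hform]
    have hDrw : y ⬝ᵥ y = ∑ v ∈ Sᶜ, y v ^ 2 := by
      rw [show y ⬝ᵥ y = ∑ v : Fin n, y v ^ 2 from by simp [dotProduct, sq]]
      refine (Finset.sum_subset (Finset.subset_univ Sᶜ) ?_).symm
      intro v _ hv
      rw [Finset.mem_compl, not_not] at hv
      rw [hyv, hxW v hv]; ring
    rw [hDrw]
    set F : Fin n × Fin n → ℝ := fun p => if G.Adj p.1 p.2 then (y p.1 - y p.2) ^ 2 else 0
      with hF
    have hFnn : ∀ p : Fin n × Fin n, 0 ≤ F p := by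
      intro p; rw [hF]; dsimp only; split <;> positivity
    have hsum_eq : ∑ i : Fin n, ∑ j : Fin n, (if G.Adj i j then (y i - y j) ^ 2 else 0)
        = ∑ p ∈ Finset.univ ×ˢ Finset.univ, F p := by
      rw [Finset.sum_product]
    let T₁ : Finset (Fin n × Fin n) := Sᶜ.image fun v => (u v, v)
    let T₂ : Finset (Fin n × Fin n) := Sᶜ.image fun v => (v, u v)
    have hdisj : Disjoint T₁ T₂ := by
      rw [Finset.disjoint_left]
      rintro p hp1 hp2
      obtain ⟨v, hv, rfl⟩ := Finset.mem_image.mp hp1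
      obtain ⟨w, hw, hpw⟩ := Finset.mem_image.mp hp2
      rw [Finset.mem_compl] at hv hw
      have h1 : (u v) ∈ S := (huS v hv).1
      have h2 : w = u v := congrArg Prod.fst hpw
      exact hw (h2 ▸ h1)
    have hT1 : ∑ p ∈ T₁, F p = ∑ v ∈ Sᶜ, y v ^ 2 := by
      rw [Finset.sum_image (fun a _ b _ hab => congrArg Prod.snd hab)]
      refine Finset.sum_congr rfl fun v hv => ?_
      rw [Finset.mem_compl] at hv
      obtain ⟨h1, h2⟩ := huS v hv
      rw [hF]
      simp only
      rw [if_pos h2, hyv (u v), hyv v, hxW _ h1]; ring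
    have hT2 : ∑ p ∈ T₂, F p = ∑ v ∈ Sᶜ, y v ^ 2 := by
      rw [Finset.sum_image (fun a _ b _ hab => congrArg Prod.fst hab)]
      refine Finset.sum_congr rfl fun v hv => ?_
      rw [Finset.mem_compl] at hv
      obtain ⟨h1, h2⟩ := huS v hv
      rw [hF]
      simp only
      rw [if_pos h2.symm, hyv (u v), hyv v, hxW _ h1]; ring
    have hsub : ∑ p ∈ T₁ ∪ T₂, F p ≤ ∑ p ∈ Finset.univ ×ˢ Finset.univ, F p := by
      refine Finset.sum_le_sum_of_subset_of_nonneg ?_ fun p _ _ => hFnn p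
      rw [Finset.univ_product_univ]
      exact Finset.subset_univ _
    rw [Finset.sum_union hdisj, hT1, hT2] at hsub
    rw [hsum_eq]
    linarith
  exact absurd hge (not_le.mpr hlt)

end Aux

/-- Theorem 1: for any graph $G$, $m_G[0,1) \le \gamma(G)$. -/
theorem mCount_Ico_zero_one_le_domNum {n : ℕ} (G : SimpleGraph (Fin n)) :
    mCount G (fun x => 0 ≤ x ∧ x < 1) ≤ domNum G := by
  have hne : {k | ∃ S : Finset (Fin n), IsDomSet G S ∧ S.card = k}.Nonempty :=
    ⟨(Finset.univ : Finset (Fin n)).card, Finset.univ,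
      fun v hv => absurd (Finset.mem_univ v) hv, rfl⟩
  obtain ⟨S, hS, hcard⟩ := Nat.sInf_mem hne
  calc mCount G (fun x => 0 ≤ x ∧ x < 1) ≤ S.card := mCount_le_card_of_isDomSet G hS
    _ = domNum G := hcard
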